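/- Let π be a probability measure on [0,∞), let κ > 0 and λ > 0, and let p_eff(w) = 1 − e^{−κw}. Then the effective capacity satisfies λ·∫ (1 − h((1 − √(1 − p_eff(w)))/2)) dπ(w) = (λ/ln 2) · ∑_{k=1}^{∞} (1/(2k(2k−1))) · ∫ e^{−κ k w} dπ(w). -/

import Mathlib

open MeasureTheory

/-- The binary entropy function in base 2 (with the convention `h(0) = h(1) = 0`,
using `Real.logb 2 0 = 0`). -/
noncomputable def binH (x : ℝ) : ℝ := -(x * Real.logb 2 x) - (1 - x) * Real.logb 2 (1 - x)

lemma hasSum_core {z : ℝ} (h : |z| < 1) :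
    HasSum (fun k : ℕ => 2 * z ^ (2 * k + 2) / ((2 * (k : ℝ) + 2) * (2 * (k : ℝ) + 1)))
      ((1 - z) * Real.log (1 - z) + (1 + z) * Real.log (1 + z)) := by
  have h1 := (Real.hasSum_log_sub_log_of_abs_lt_one h).mul_left z
  have hz2 : |z ^ 2| < 1 := by
    rw [abs_pow]
    exact pow_lt_one₀ (abs_nonneg z) h (by norm_num)
  have h2 := Real.hasSum_pow_div_log_of_abs_lt_one hz2
  have h3 := h1.sub h2
  have hlog : Real.log (1 - z ^ 2) = Real.log (1 - z) + Real.log (1 + z) := by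
    have h1z : (0:ℝ) < 1 - z := by cases abs_lt.1 h; linarith
    have h2z : (0:ℝ) < 1 + z := by cases abs_lt.1 h; linarith
    rw [show (1:ℝ) - z ^ 2 = (1 - z) * (1 + z) by ring, Real.log_mul h1z.ne' h2z.ne']
  convert h3 using 1
  · rfl
  · funext k
    have hk1 : (2 * (k:ℝ) + 1) ≠ 0 := by positivity
    have hk2 : ((k:ℝ) + 1) ≠ 0 := by positivity
    field_simp
    ring
  · rw [hlog]; ring

noncomputable def fcoef : ℕ → ℝ := fun n => if Even n then 2 / ((n : ℝ) * ((n : ℝ) - 1)) else 0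

lemma fcoef_comp (k : ℕ) : fcoef (2 * k + 2) = 2 / ((2 * (k:ℝ) + 2) * (2 * (k:ℝ) + 1)) := by
  simp only [fcoef, if_pos (by exact ⟨k + 1, by ring⟩ : Even (2 * k + 2))]
  push_cast; ring_nf

lemma fcoef_vanish : ∀ n ∉ Set.range (fun k : ℕ => 2 * k + 2), fcoef n = 0 := by
  intro n hn
  rcases Nat.even_or_odd n with he | ho
  · rcases he with ⟨m, hm⟩
    rcases Nat.eq_zero_or_pos m with rfl | hm0
    · simp [fcoef, hm]
    · exact absurd ⟨m - 1, by show 2 * (m - 1) + 2 = n; omega⟩ hn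
  · simp [fcoef, Nat.not_even_iff_odd.mpr ho]

lemma summable_c : Summable (fun k : ℕ => 2 / ((2 * (k:ℝ) + 2) * (2 * (k:ℝ) + 1))) := by
  have hg : Summable (fun k : ℕ => 2 / ((k:ℝ) + 1) ^ 2) := by
    have h1 : Summable (fun k : ℕ => 1 / ((k:ℝ) + 1) ^ 2) := by
      have := Real.summable_one_div_nat_pow.mpr (le_refl 2)
      exact_mod_cast (summable_nat_add_iff 1).mpr this
    simpa [div_eq_mul_inv, mul_comm] using h1.mul_left 2
  apply hg.of_nonneg_of_le (fun k => by positivity)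
  intro k
  have h1 : ((k:ℝ) + 1) ^ 2 ≤ (2 * (k:ℝ) + 2) * (2 * (k:ℝ) + 1) := by
    nlinarith [k.cast_nonneg (α := ℝ)]
  gcongr

lemma hinj : Function.Injective (fun k : ℕ => 2 * k + 2) := by
  intro a b h
  simp only [] at h
  omega

lemma hasSum_f {x : ℝ} (h : |x| < 1) :
    HasSum (fun n : ℕ => fcoef n * x ^ n)
      ((1 - x) * Real.log (1 - x) + (1 + x) * Real.log (1 + x)) := by
  rw [← Function.Injective.hasSum_iff hinj
    (fun n hn => by rw [fcoef_vanish n hn, zero_mul])]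
  have := hasSum_core h
  convert this using 1
  funext k
  simp only [Function.comp_apply]
  rw [fcoef_comp]
  push_cast
  ring

lemma summable_f : Summable fcoef := by
  rw [← Function.Injective.summable_iff hinj fcoef_vanish]
  apply summable_c.congr
  intro k
  exact (fcoef_comp k).symm

lemma hasSum_c_one :
    HasSum (fun k : ℕ => 2 / ((2 * (k:ℝ) + 2) * (2 * (k:ℝ) + 1))) (2 * Real.log 2) := by
  have hts : ∑' n, fcoef n = 2 * Real.log 2 := by
    have ha := Real.tendsto_tsum_powerSeries_nhdsWithin_lt summable_f.hasSum.tendsto_sum_nat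
    have hcont : Continuous (fun x : ℝ =>
        (1 - x) * Real.log (1 - x) + (1 + x) * Real.log (1 + x)) := by
      exact (Real.continuous_mul_log.comp (continuous_const.sub continuous_id)).add
        (Real.continuous_mul_log.comp (continuous_const.add continuous_id))
    have hb : Filter.Tendsto (fun x : ℝ =>
        (1 - x) * Real.log (1 - x) + (1 + x) * Real.log (1 + x))
        (nhdsWithin 1 (Set.Iio 1)) (nhds (2 * Real.log 2)) := by
      have h1 : (1 - (1:ℝ)) * Real.log (1 - 1) + (1 + 1) * Real.log (1 + 1) = 2 * Real.log 2 := by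
        norm_num
      exact h1 ▸ (hcont.tendsto 1).mono_left nhdsWithin_le_nhds
    have heq : (fun x : ℝ => ∑' n, fcoef n * x ^ n) =ᶠ[nhdsWithin 1 (Set.Iio 1)]
        (fun x : ℝ => (1 - x) * Real.log (1 - x) + (1 + x) * Real.log (1 + x)) := by
      filter_upwards [Ioo_mem_nhdsLT_of_mem
        (show (1:ℝ) ∈ Set.Ioc (-1:ℝ) 1 by constructor <;> norm_num)] with x hx
      exact (hasSum_f (abs_lt.mpr ⟨hx.1, hx.2⟩)).tsum_eq
    exact tendsto_nhds_unique (ha.congr' heq) hb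
  have hs : HasSum fcoef (2 * Real.log 2) := hts ▸ summable_f.hasSum
  have := (Function.Injective.hasSum_iff hinj fcoef_vanish).mpr hs
  apply this.congr_fun
  intro k
  exact (fcoef_comp k).symm


lemma hasSum_zle {z : ℝ} (h0 : 0 < z) (h1 : z ≤ 1) :
    HasSum (fun k : ℕ => 2 * z ^ (2 * k + 2) / ((2 * (k : ℝ) + 2) * (2 * (k : ℝ) + 1)))
      ((1 - z) * Real.log (1 - z) + (1 + z) * Real.log (1 + z)) := by
  rcases eq_or_lt_of_le h1 with rfl | hlt
  · have hv : ((1:ℝ) - 1) * Real.log (1 - 1) + (1 + 1) * Real.log (1 + 1) = 2 * Real.log 2 := by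
      norm_num
    rw [hv]
    simpa using hasSum_c_one
  · exact hasSum_core (abs_lt.mpr ⟨by linarith, hlt⟩)

lemma entropy_eq {z : ℝ} (h0 : 0 < z) (h1 : z ≤ 1) :
    1 - binH ((1 - z) / 2) =
      ((1 - z) * Real.log (1 - z) + (1 + z) * Real.log (1 + z)) / (2 * Real.log 2) := by
  have hlog2 : Real.log 2 ≠ 0 := by
    have := Real.log_pos (by norm_num : (1:ℝ) < 2); linarith
  have h1x : 1 - (1 - z) / 2 = (1 + z) / 2 := by ring
  rcases eq_or_lt_of_le h1 with rfl | hlt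
  · simp [binH, Real.log_zero]
    norm_num
  · have hpos1 : (0:ℝ) < 1 - z := by linarith
    have hpos2 : (0:ℝ) < 1 + z := by linarith
    unfold binH
    rw [h1x, Real.logb, Real.logb, Real.log_div hpos1.ne' two_ne_zero,
      Real.log_div hpos2.ne' two_ne_zero]
    field_simp
    ring

lemma pointwise_eq {z : ℝ} (h0 : 0 < z) (h1 : z ≤ 1) :
    1 - binH ((1 - z) / 2) =
      (1 / Real.log 2) *
        ∑' k : ℕ, (1 / ((2 * ((k : ℝ) + 1)) * (2 * ((k : ℝ) + 1) - 1))) * z ^ (2 * k + 2) := by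
  rw [entropy_eq h0 h1, ← (hasSum_zle h0 h1).tsum_eq, ← tsum_mul_left, ← tsum_div_const]
  apply tsum_congr
  intro k
  have hk1 : (2 * (k:ℝ) + 1) ≠ 0 := by positivity
  have hk2 : (2 * (k:ℝ) + 2) ≠ 0 := by positivity
  have hlog2 : Real.log 2 ≠ 0 := by
    have := Real.log_pos (by norm_num : (1:ℝ) < 2); linarith
  have hb : 2 * ((k:ℝ) + 1) - 1 = 2 * (k:ℝ) + 1 := by ring
  have ha : 2 * ((k:ℝ) + 1) = 2 * (k:ℝ) + 2 := by ring
  rw [hb, ha]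
  field_simp


lemma exp_point {κ w : ℝ} (hw : 0 ≤ w) (hκ : 0 < κ) :
    1 - binH ((1 - Real.sqrt (1 - (1 - Real.exp (-(κ * w))))) / 2) =
      (1 / Real.log 2) *
        ∑' k : ℕ, (1 / ((2 * ((k : ℝ) + 1)) * (2 * ((k : ℝ) + 1) - 1))) *
          Real.exp (-(κ * ((k : ℝ) + 1) * w)) := by
  set z := Real.exp (-(κ * w) / 2) with hz
  have hzsq : Real.exp (-(κ * w)) = z ^ 2 := by
    rw [hz, ← Real.exp_nat_mul]
    congr 1
    push_cast
    ring
  have hsqrt : Real.sqrt (1 - (1 - Real.exp (-(κ * w)))) = z := by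
    rw [show (1:ℝ) - (1 - Real.exp (-(κ * w))) = Real.exp (-(κ * w)) by ring, hzsq,
      Real.sqrt_sq (Real.exp_nonneg _)]
  have h0 : 0 < z := Real.exp_pos _
  have h1 : z ≤ 1 := Real.exp_le_one_iff.mpr (by nlinarith)
  rw [hsqrt, pointwise_eq h0 h1]
  congr 1
  apply tsum_congr
  intro k
  congr 1
  rw [hz, ← Real.exp_nat_mul]
  congr 1
  push_cast
  ring

/-- For a probability measure `π` on `[0,∞)` modelling the stationary waiting time, `κ > 0`,
`λ > 0`, and exponential decoherence `p_eff(w) = 1 − e^{−κw}`, the effective capacity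
`λ·E_π[1 − h((1 − √(1 − p_eff(W)))/2)]` equals
`(λ/ln 2)·∑_{k≥1} (1/(2k(2k−1)))·E_π[e^{−κkW}]`. -/
theorem effective_capacity_series (π : Measure ℝ) [IsProbabilityMeasure π]
    (hπ : π (Set.Iio (0 : ℝ)) = 0) (κ lam : ℝ) (hκ : 0 < κ) (hlam : 0 < lam) :
    lam * ∫ w, (1 - binH ((1 - Real.sqrt (1 - (1 - Real.exp (-(κ * w))))) / 2)) ∂π =
      (lam / Real.log 2) *
        ∑' k : ℕ,
          (1 / ((2 * ((k : ℝ) + 1)) * (2 * ((k : ℝ) + 1) - 1))) *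
            ∫ w, Real.exp (-(κ * ((k : ℝ) + 1) * w)) ∂π := by

  have hae : ∀ᵐ w ∂π, 0 ≤ w := by
    rw [ae_iff]
    have hs : {a : ℝ | ¬ 0 ≤ a} = Set.Iio 0 := by ext a; simp [not_le]
    rw [hs]; exact hπ
  set c : ℕ → ℝ := fun k => 1 / ((2 * ((k : ℝ) + 1)) * (2 * ((k : ℝ) + 1) - 1)) with hcdef
  have hcpos : ∀ k, 0 < c k := by
    intro k
    have h1 : (0:ℝ) < 2 * ((k:ℝ) + 1) := by positivity
    have h2 : (0:ℝ) < 2 * ((k:ℝ) + 1) - 1 := by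
      have : (0:ℝ) ≤ (k:ℝ) := k.cast_nonneg
      linarith
    exact div_pos one_pos (mul_pos h1 h2)
  set g : ℕ → ℝ → ℝ := fun k w => c k * Real.exp (-(κ * ((k : ℝ) + 1) * w)) with hgdef
  have hexp_le : ∀ k : ℕ, ∀ w : ℝ, 0 ≤ w → Real.exp (-(κ * ((k : ℝ) + 1) * w)) ≤ 1 := by
    intro k w hw
    apply Real.exp_le_one_iff.mpr
    have : (0:ℝ) ≤ κ * ((k:ℝ) + 1) * w := by positivity
    linarith
  have hgint : ∀ k, Integrable (g k) π := by
    intro k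
    refine ⟨(Continuous.aestronglyMeasurable (by fun_prop)), ?_⟩
    apply HasFiniteIntegral.of_bounded (C := c k)
    filter_upwards [hae] with w hw
    rw [hgdef]
    simp only [Real.norm_eq_abs, abs_of_nonneg (mul_nonneg (hcpos k).le (Real.exp_nonneg _))]
    calc c k * Real.exp (-(κ * ((k : ℝ) + 1) * w)) ≤ c k * 1 := by
          exact mul_le_mul_of_nonneg_left (hexp_le k w hw) (hcpos k).le
      _ = c k := mul_one _
  have hnorm : ∀ k, ∫ w, ‖g k w‖ ∂π ≤ c k := by
    intro k
    have h1 : ∫ w, ‖g k w‖ ∂π ≤ ∫ _, c k ∂π := by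
      apply integral_mono_ae (hgint k).norm (integrable_const _)
      filter_upwards [hae] with w hw
      rw [hgdef]
      simp only [Real.norm_eq_abs, abs_of_nonneg (mul_nonneg (hcpos k).le (Real.exp_nonneg _))]
      calc c k * Real.exp (-(κ * ((k : ℝ) + 1) * w)) ≤ c k * 1 :=
            mul_le_mul_of_nonneg_left (hexp_le k w hw) (hcpos k).le
        _ = c k := mul_one _
    simpa using h1
  have hcsummable : Summable c := by
    have := summable_c.mul_left (1/2 : ℝ)
    apply this.congr
    intro k
    show _ = 1 / ((2 * ((k:ℝ) + 1)) * (2 * ((k:ℝ) + 1) - 1))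
    have hb : 2 * ((k:ℝ) + 1) - 1 = 2 * (k:ℝ) + 1 := by ring
    have ha : 2 * ((k:ℝ) + 1) = 2 * (k:ℝ) + 2 := by ring
    rw [hb, ha]
    ring
  have hsumnorm : Summable (fun k => ∫ w, ‖g k w‖ ∂π) :=
    hcsummable.of_nonneg_of_le (fun k => integral_nonneg (fun w => norm_nonneg _)) hnorm
  have hswap := MeasureTheory.integral_tsum_of_summable_integral_norm hgint hsumnorm
  have hint_eq : ∫ w, (1 - binH ((1 - Real.sqrt (1 - (1 - Real.exp (-(κ * w))))) / 2)) ∂π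
      = ∫ w, (1 / Real.log 2) * ∑' k, g k w ∂π := by
    apply integral_congr_ae
    filter_upwards [hae] with w hw
    exact exp_point hw hκ
  rw [hint_eq, integral_const_mul, ← hswap]
  have hterm : ∀ k : ℕ, ∫ w, g k w ∂π
      = c k * ∫ w, Real.exp (-(κ * ((k : ℝ) + 1) * w)) ∂π := by
    intro k
    rw [hgdef]
    exact integral_const_mul _ _
  rw [tsum_congr hterm]
  ring
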